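/- Let 1 < p < ∞ and let X be a Banach space. If the dual space X* has the p-Dunford–Pettis property, then X has the p-Dunford–Pettis property. -/

import Mathlib

open NormedSpace ENNReal

noncomputable section

/-- A sequence `x` in a normed space is weakly `p`-summable if
`∑ₙ |f (x n)|^p < ∞` for every continuous functional `f`. -/
def WeaklySummable (p : ℝ) {X : Type*} [NormedAddCommGroup X] [NormedSpace ℝ X]
    (x : ℕ → X) : Prop :=
  ∀ f : StrongDual ℝ X, Summable fun n => |f (x n)| ^ p

/-- `X` has the `p`-Dunford–Pettis property if for every weakly `p`-summable
sequence `x` in `X` and weakly `p`-summable sequence `f` in `X*`,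
`∑ₙ ∑ₖ |fₖ (xₙ)|^p < ∞`. -/
def PDPP (p : ℝ) (X : Type*) [NormedAddCommGroup X] [NormedSpace ℝ X] : Prop :=
  ∀ x : ℕ → X, WeaklySummable p x → ∀ f : ℕ → StrongDual ℝ X, WeaklySummable p f →
    Summable fun n => ∑' k, |f k (x n)| ^ p

/-- If `X*` has the `p`-Dunford–Pettis property, then so does `X`. -/
theorem stmt_12 {X : Type*} [NormedAddCommGroup X] [NormedSpace ℝ X] [CompleteSpace X]
    (p : ℝ) (hp : 1 < p) (h : PDPP p (StrongDual ℝ X)) : PDPP p X := by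
  intro x hx f hf
  set J := inclusionInDoubleDual ℝ X with hJ
  have hJx : WeaklySummable p (fun n => J (x n)) := by
    intro G
    have := hx (G.comp J)
    simpa using this
  -- apply the p-DPP of X* to the sequence f and the functionals J ∘ x
  have hswap : Summable fun k => ∑' n, |f k (x n)| ^ p := by
    have := h f hf (fun n => J (x n)) hJx
    simpa [hJ, NormedSpace.dual_def] using this
  have hslice : ∀ n : ℕ, Summable fun k => |f k (x n)| ^ p := by
    intro n
    have := hf (J (x n))
    simpa [hJ, NormedSpace.dual_def] using this
  have hslice' : ∀ k : ℕ, Summable fun n => |f k (x n)| ^ p := fun k => hx (f k)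
  -- summability over ℕ × ℕ (transposed order)
  have hprod : Summable fun q : ℕ × ℕ => |f q.1 (x q.2)| ^ p := by
    refine (summable_prod_of_nonneg (fun q => by positivity)).2 ⟨fun k => hslice' k, hswap⟩
  have hprod' : Summable fun q : ℕ × ℕ => |f q.2 (x q.1)| ^ p :=
    (Equiv.prodComm ℕ ℕ).summable_iff.mpr hprod
  exact ((summable_prod_of_nonneg (fun q => by positivity)).1 hprod').2
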